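/- Let c, d be real numbers with 0 < c < d and let f ∈ 𝓕. Then (n ↦ n^c·f(n)) ≪ f if and only if (n ↦ n^d·f(n)) ≪ f (here n^c denotes the real power (n : ℝ)^c). -/

import Mathlib

/-- `g ⪯₁ f`: there exist positive integers `K, M, N` such that
`g n ≤ K * f (M * n)` for every `n ≥ N`. -/
def Preceq1 (g f : ℕ → ℝ) : Prop :=
  ∃ K M N : ℕ, 0 < K ∧ 0 < M ∧ 0 < N ∧ ∀ n ≥ N, g n ≤ (K : ℝ) * f (M * n)

/-- `f ≪ g`: there is an unbounded `t ∈ 𝓕` with `(f · t) ⪯₁ g`. -/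
def LL (f g : ℕ → ℝ) : Prop :=
  ∃ t : ℕ → ℝ, Monotone t ∧ (∀ n, 0 ≤ t n) ∧ (∀ C : ℝ, ∃ n, C < t n) ∧
    Preceq1 (fun n => f n * t n) g

theorem stmt_8 (c d : ℝ) (hc : 0 < c) (hcd : c < d)
    (f : ℕ → ℝ) (hfmono : Monotone f) (hfnonneg : ∀ n, 0 ≤ f n) :
    LL (fun n : ℕ => (n : ℝ) ^ c * f n) f ↔ LL (fun n : ℕ => (n : ℝ) ^ d * f n) f := by
  constructor
  · rintro ⟨t, htmono, htnn, htub, K, M, N, hK, hM, hN, hbound⟩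
    obtain ⟨j, hj⟩ := exists_nat_ge (d / c)
    have hdc : d ≤ c * j := by
      rw [mul_comm]
      exact (div_le_iff₀ hc).mp hj
    have hj1 : 1 ≤ j := by
      by_contra h
      push_neg at h
      interval_cases j
      · simp at hdc
        nlinarith
    -- key iterated bound
    have key : ∀ i : ℕ, ∀ n : ℕ, max N 1 ≤ n →
        ((n : ℝ) ^ c) ^ i * t n ^ i * f n ≤ (K : ℝ) ^ i * f (M ^ i * n) := by
      intro i
      induction i with
      | zero => intro n hn; simp
      | succ i ih =>
        intro n hn
        have hn1 : (1 : ℕ) ≤ n := le_trans (le_max_right _ _) hn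
        have hnN : N ≤ n := le_trans (le_max_left _ _) hn
        set m := M ^ i * n with hm
        have hMi : 1 ≤ M ^ i := Nat.one_le_pow _ _ hM
        have hnm : n ≤ m := by
          calc n = 1 * n := (one_mul n).symm
          _ ≤ M ^ i * n := Nat.mul_le_mul_right _ hMi
        have hmN : N ≤ m := le_trans hnN hnm
        have hnc : (0 : ℝ) ≤ (n : ℝ) ^ c := Real.rpow_nonneg (Nat.cast_nonneg n) c
        have hnci : (0 : ℝ) ≤ ((n : ℝ) ^ c) ^ i := pow_nonneg hnc i
        have hti : (0 : ℝ) ≤ t n ^ i := pow_nonneg (htnn n) i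
        -- single step at m
        have step : (n : ℝ) ^ c * t n * f m ≤ (K : ℝ) * f (M * m) := by
          have h1 : (n : ℝ) ^ c * t n * f m ≤ (m : ℝ) ^ c * t m * f m := by
            have hcc : (n : ℝ) ^ c ≤ (m : ℝ) ^ c :=
              Real.rpow_le_rpow (Nat.cast_nonneg n) (by exact_mod_cast hnm) hc.le
            have htt : t n ≤ t m := htmono hnm
            have := mul_le_mul (mul_le_mul hcc htt (htnn n) (Real.rpow_nonneg (Nat.cast_nonneg m) c))
              (le_refl (f m)) (hfnonneg m) (mul_nonneg (Real.rpow_nonneg (Nat.cast_nonneg m) c)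
                ((htnn n).trans htt))
            exact this
          have hb : (m : ℝ) ^ c * f m * t m ≤ (K : ℝ) * f (M * m) := hbound m hmN
          exact h1.trans (le_of_eq_of_le (by ring) hb)
        have ihn := ih n hn
        calc ((n : ℝ) ^ c) ^ (i + 1) * t n ^ (i + 1) * f n
            = ((n : ℝ) ^ c * t n) * (((n : ℝ) ^ c) ^ i * t n ^ i * f n) := by ring
          _ ≤ ((n : ℝ) ^ c * t n) * ((K : ℝ) ^ i * f m) := by
              exact mul_le_mul_of_nonneg_left ihn (mul_nonneg hnc (htnn n))
          _ = (K : ℝ) ^ i * ((n : ℝ) ^ c * t n * f m) := by ring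
          _ ≤ (K : ℝ) ^ i * ((K : ℝ) * f (M * m)) := by
              exact mul_le_mul_of_nonneg_left step (pow_nonneg (Nat.cast_nonneg K) i)
          _ = (K : ℝ) ^ (i + 1) * f (M ^ (i + 1) * n) := by
              have hnat : M * m = M ^ (i + 1) * n := by rw [hm, pow_succ]; ring
              rw [hnat]; ring
    refine ⟨fun n => t n ^ j, ?_, fun n => pow_nonneg (htnn n) j, ?_,
      K ^ j, M ^ j, max N 1, pow_pos hK j, pow_pos hM j,
      lt_of_lt_of_le one_pos (le_max_right _ _), ?_⟩
    · intro a b hab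
      exact pow_le_pow_left₀ (htnn a) (htmono hab) j
    · intro C
      obtain ⟨n, hn⟩ := htub (max C 1)
      refine ⟨n, lt_of_le_of_lt (le_max_left C 1) (lt_of_lt_of_le hn ?_)⟩
      exact le_self_pow₀ (le_of_lt (lt_of_le_of_lt (le_max_right C 1) hn)) (by omega)
    · intro n hn
      have hn1 : (1 : ℝ) ≤ (n : ℝ) := by
        exact_mod_cast le_trans (le_max_right N 1) hn
      have hd : (n : ℝ) ^ d ≤ ((n : ℝ) ^ c) ^ j := by
        rw [← Real.rpow_natCast ((n : ℝ) ^ c) j, ← Real.rpow_mul (le_trans zero_le_one hn1)]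
        exact Real.rpow_le_rpow_of_exponent_le hn1 hdc
      have hk := key j n hn
      have h2 : (n : ℝ) ^ d * f n * t n ^ j ≤ ((n : ℝ) ^ c) ^ j * t n ^ j * f n := by
        have := mul_le_mul_of_nonneg_right hd
          (mul_nonneg (hfnonneg n) (pow_nonneg (htnn n) j))
        calc (n : ℝ) ^ d * f n * t n ^ j = (n : ℝ) ^ d * (f n * t n ^ j) := by ring
          _ ≤ ((n : ℝ) ^ c) ^ j * (f n * t n ^ j) := this
          _ = ((n : ℝ) ^ c) ^ j * t n ^ j * f n := by ring
      have := h2.trans hk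
      simpa [Nat.cast_pow] using this
  · rintro ⟨t, htmono, htnn, htub, K, M, N, hK, hM, hN, hbound⟩
    refine ⟨t, htmono, htnn, htub, K, M, max N 1,
      hK, hM, lt_of_lt_of_le one_pos (le_max_right _ _), ?_⟩
    intro n hn
    have hn1 : (1 : ℝ) ≤ (n : ℝ) := by
      exact_mod_cast le_trans (le_max_right N 1) hn
    have h1 : (n : ℝ) ^ c ≤ (n : ℝ) ^ d :=
      Real.rpow_le_rpow_of_exponent_le hn1 hcd.le
    have h2 : (n : ℝ) ^ c * f n * t n ≤ (n : ℝ) ^ d * f n * t n := by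
      have := mul_le_mul_of_nonneg_right h1 (mul_nonneg (hfnonneg n) (htnn n))
      calc (n : ℝ) ^ c * f n * t n = (n : ℝ) ^ c * (f n * t n) := by ring
        _ ≤ (n : ℝ) ^ d * (f n * t n) := this
        _ = (n : ℝ) ^ d * f n * t n := by ring
    exact h2.trans (hbound n (le_trans (le_max_left _ _) hn))
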